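/- Let x ∈ ℝⁿ and suppose there exist γ > 0 and infinitely many t ∈ ℤ₊ such that the lattice g_t Λ_x contains a nonzero vector of supremum norm at most e^{-γt}, where g_t = diag(e^{nt}, e^{-t}, …, e^{-t}) and Λ_x = {(p + x·q, q) : p ∈ ℤ, q ∈ ℤⁿ}. Then x is very well approximable, i.e. there exists ε > 0 such that |p + x·q| < ‖q‖^{-n(1+ε)} for infinitely many q ∈ ℤⁿ, p ∈ ℤ. -/

import Mathlib

open scoped BigOperators

/-- The lattice `Λ_x = {(p + x·q, q) : p ∈ ℤ, q ∈ ℤⁿ} ⊂ ℝ^{n+1}`. -/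
def Lambda (n : ℕ) (x : Fin n → ℝ) : Set (Fin (n + 1) → ℝ) :=
  {v | ∃ (p : ℤ) (q : Fin n → ℤ),
    v = Fin.cons ((p : ℝ) + ∑ i, x i * (q i : ℝ)) (fun i => (q i : ℝ))}

/-- The action of `g_t = diag(e^{nt}, e^{-t}, …, e^{-t})` on `ℝ^{n+1}`. -/
noncomputable def gAct (n : ℕ) (t : ℕ) (v : Fin (n + 1) → ℝ) : Fin (n + 1) → ℝ :=
  Fin.cons (Real.exp ((n : ℝ) * t) * v 0) (fun i => Real.exp (-(t : ℝ)) * v i.succ)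


/-- Extraction: a small nonzero vector of `g_t Λ_x` yields a good rational approximation. -/
lemma extract_aux (n : ℕ) (x : Fin n → ℝ) (γ : ℝ) (hγ : 0 < γ) (t : ℕ) (ht : 0 < t)
    (hv : ∃ v ∈ gAct n t '' Lambda n x, v ≠ 0 ∧ ‖v‖ ≤ Real.exp (-γ * t)) :
    ∃ (p : ℤ) (q : Fin n → ℤ), q ≠ 0 ∧
      |(p : ℝ) + ∑ i, x i * (q i : ℝ)| ≤ Real.exp (-((n : ℝ) + γ) * t) ∧
      ‖(fun i => (q i : ℝ) : Fin n → ℝ)‖ ≤ Real.exp ((1 - γ) * t) := by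
  obtain ⟨v, ⟨w, hw, rfl⟩, hv0, hvn⟩ := hv
  obtain ⟨p, q, rfl⟩ := hw
  set a : ℝ := (p : ℝ) + ∑ i, x i * (q i : ℝ) with ha
  have hcomp : ∀ i, gAct n t (Fin.cons a (fun i => (q i : ℝ))) i =
      (Fin.cons (Real.exp ((n : ℝ) * t) * a) (fun i => Real.exp (-(t : ℝ)) * (q i : ℝ)) : Fin (n + 1) → ℝ) i := by
    intro i
    simp [gAct]
  have hbound := (pi_norm_le_iff_of_nonneg (Real.exp_nonneg _)).mp hvn
  -- bound on a
  have h0 := hbound 0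
  rw [hcomp 0] at h0
  simp only [Fin.cons_zero, Real.norm_eq_abs, abs_mul, abs_of_pos (Real.exp_pos _)] at h0
  have hAa : |a| ≤ Real.exp (-((n : ℝ) + γ) * t) := by
    have h1 : |a| * Real.exp ((n : ℝ) * t) ≤ Real.exp (-γ * t) := by linarith [h0, mul_comm (Real.exp ((n : ℝ) * t)) |a|]
    have h2 : |a| ≤ Real.exp (-γ * t) / Real.exp ((n : ℝ) * t) :=
      (le_div_iff₀ (Real.exp_pos _)).mpr h1
    rw [← Real.exp_sub] at h2
    have : -γ * t - (n : ℝ) * t = -((n : ℝ) + γ) * t := by ring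
    rwa [this] at h2
  -- bounds on q
  have hq : ∀ i, |(q i : ℝ)| ≤ Real.exp ((1 - γ) * t) := by
    intro i
    have hi := hbound i.succ
    rw [hcomp i.succ] at hi
    simp only [Fin.cons_succ, Real.norm_eq_abs, abs_mul, abs_of_pos (Real.exp_pos _)] at hi
    have h1 : Real.exp (-(t : ℝ)) * |(q i : ℝ)| ≤ Real.exp (-γ * t) := hi
    have h2 : |(q i : ℝ)| ≤ Real.exp (-γ * t) / Real.exp (-(t : ℝ)) := by
      rw [le_div_iff₀ (Real.exp_pos _)]
      linarith [mul_comm (Real.exp (-(t : ℝ))) |(q i : ℝ)|]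
    rw [← Real.exp_sub] at h2
    have : -γ * t - -(t : ℝ) = (1 - γ) * t := by ring
    rwa [this] at h2
  -- q ≠ 0
  have hqne : q ≠ 0 := by
    intro hq0
    subst hq0
    have hsum : a = (p : ℝ) := by simp [ha]
    have hp1 : |(p : ℝ)| < 1 := by
      rw [← hsum]
      refine lt_of_le_of_lt hAa ?_
      rw [show (1 : ℝ) = Real.exp 0 by simp]
      apply Real.exp_lt_exp.mpr
      have ht1 : (1 : ℝ) ≤ t := by exact_mod_cast ht
      have : (0 : ℝ) < (n : ℝ) + γ := by positivity
      nlinarith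
    have hp0 : p = 0 := by
      have h2 : ((|p| : ℤ) : ℝ) < 1 := by rwa [Int.cast_abs]
      have h3 : |p| < 1 := by exact_mod_cast h2
      exact Int.abs_lt_one_iff.mp h3
    apply hv0
    funext i
    refine Fin.cases ?_ ?_ i
    · rw [hcomp 0]; simp [hsum, hp0]
    · intro j; rw [hcomp j.succ]; simp
  refine ⟨p, q, hqne, hAa, ?_⟩
  exact (pi_norm_le_iff_of_nonneg (Real.exp_nonneg _)).mpr fun i => by
    simpa [Real.norm_eq_abs] using hq i

/-- Key numerical inequality. -/
lemma keyineq_aux (n : ℕ) (hn : 0 < n) (β : ℝ) (hβ0 : 0 < β) (hβ1 : β ≤ 1/2)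
    (t : ℕ) (ht : 0 < t) (a r : ℝ) (hr1 : 1 ≤ r)
    (ha : |a| ≤ Real.exp (-((n : ℝ) + β) * t)) (hrt : r ≤ Real.exp ((1 - β) * t)) :
    |a| < r ^ (-(n : ℝ) * (1 + β / (2 * n))) := by
  have hn1 : (1 : ℝ) ≤ n := by exact_mod_cast hn
  have ht1 : (1 : ℝ) ≤ t := by exact_mod_cast ht
  set c : ℝ := (n : ℝ) * (1 + β / (2 * n)) with hc
  have hcval : c = (n : ℝ) + β / 2 := by
    field_simp [hc]
    rw [hc]; have hn0 : (n : ℝ) ≠ 0 := by positivity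
    field_simp
  have hc0 : 0 < c := by rw [hcval]; positivity
  have h1 : r ^ c ≤ Real.exp ((1 - β) * t) ^ c :=
    Real.rpow_le_rpow (by linarith) hrt hc0.le
  have h2 : Real.exp ((1 - β) * t) ^ c = Real.exp ((1 - β) * t * c) :=
    (Real.exp_mul _ _).symm
  have h3 : (1 - β) * t * c < ((n : ℝ) + β) * t := by
    rw [hcval]
    nlinarith [mul_pos hβ0 (lt_of_lt_of_le one_pos ht1), sq_nonneg β]
  have h4 : r ^ c < Real.exp (((n : ℝ) + β) * t) :=
    lt_of_le_of_lt (h1.trans_eq h2) (Real.exp_lt_exp.mpr h3)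
  have hrc0 : 0 < r ^ c := Real.rpow_pos_of_pos (by linarith) c
  have h5 : (Real.exp (((n : ℝ) + β) * t))⁻¹ < (r ^ c)⁻¹ :=
    inv_strictAnti₀ hrc0 h4
  have h6 : Real.exp (-((n : ℝ) + β) * t) = (Real.exp (((n : ℝ) + β) * t))⁻¹ := by
    rw [← Real.exp_neg]; ring_nf
  have h7 : r ^ (-(n : ℝ) * (1 + β / (2 * n))) = (r ^ c)⁻¹ := by
    rw [show (-(n : ℝ) * (1 + β / (2 * n))) = -c by rw [hc]; ring,
      Real.rpow_neg (by linarith)]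
  rw [h7]
  calc |a| ≤ Real.exp (-((n : ℝ) + β) * t) := ha
    _ = (Real.exp (((n : ℝ) + β) * t))⁻¹ := h6
    _ < (r ^ c)⁻¹ := h5

/-- One direction of the Dani–Kleinbock–Margulis correspondence: if for some `γ > 0`
there are infinitely many `t ∈ ℤ₊` with a nonzero vector of `g_t Λ_x` of sup norm
at most `e^{-γt}`, then `x` is very well approximable. -/
theorem stmt18 (n : ℕ) (hn : 0 < n) (x : Fin n → ℝ) (γ : ℝ) (hγ : 0 < γ)
    (h : {t : ℕ | 0 < t ∧ ∃ v ∈ gAct n t '' Lambda n x,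
      v ≠ 0 ∧ ‖v‖ ≤ Real.exp (-γ * t)}.Infinite) :
    ∃ ε : ℝ, 0 < ε ∧
      {pq : ℤ × (Fin n → ℤ) | pq.2 ≠ 0 ∧
        |(pq.1 : ℝ) + ∑ i, x i * (pq.2 i : ℝ)| <
          ‖(fun i => (pq.2 i : ℝ) : Fin n → ℝ)‖ ^ (-(n : ℝ) * (1 + ε))}.Infinite := by
  have hn1 : (1 : ℝ) ≤ n := by exact_mod_cast hn
  set β : ℝ := min γ (1/2) with hβ
  have hβ0 : 0 < β := lt_min hγ (by norm_num)
  have hβh : β ≤ 1/2 := min_le_right _ _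
  have hβγ : β ≤ γ := min_le_left _ _
  refine ⟨β / (2 * n), div_pos hβ0 (by linarith), ?_⟩
  by_cases hA : ∃ (p : ℤ) (q : Fin n → ℤ), q ≠ 0 ∧ (p : ℝ) + ∑ i, x i * (q i : ℝ) = 0
  · -- Case A: an exact solution exists; scale it.
    obtain ⟨p, q, hq, hpq⟩ := hA
    obtain ⟨i₀, hi₀⟩ := Function.ne_iff.mp hq
    simp only [Pi.zero_apply] at hi₀
    apply Set.infinite_of_injective_forall_mem
      (f := fun k : ℕ => ((((k : ℤ) + 1) * p, fun i => ((k : ℤ) + 1) * q i) : ℤ × (Fin n → ℤ)))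
    · intro a b hab
      have h1 : ((a : ℤ) + 1) * q i₀ = ((b : ℤ) + 1) * q i₀ :=
        congrFun (congrArg Prod.snd hab) i₀
      have h2 : (a : ℤ) + 1 = (b : ℤ) + 1 := mul_right_cancel₀ hi₀ h1
      exact_mod_cast by omega
    · intro k
      constructor
      · intro h0
        have h1 : ((k : ℤ) + 1) * q i₀ = 0 := congrFun h0 i₀
        rcases mul_eq_zero.mp h1 with h' | h'
        · omega
        · exact hi₀ h'
      · have he : ((((k : ℤ) + 1) * p : ℤ) : ℝ) + ∑ i, x i * ((((k : ℤ) + 1) * q i : ℤ) : ℝ)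
            = ((k : ℝ) + 1) * ((p : ℝ) + ∑ i, x i * (q i : ℝ)) := by
          push_cast
          rw [mul_add, Finset.mul_sum]
          congr 1
          exact Finset.sum_congr rfl fun i _ => by ring
        rw [he, hpq, mul_zero, abs_zero]
        apply Real.rpow_pos_of_pos
        rw [norm_pos_iff]
        intro h0
        have : ((((k : ℤ) + 1) * q i₀ : ℤ) : ℝ) = 0 := congrFun h0 i₀
        have h1 : ((k : ℤ) + 1) * q i₀ = 0 := by exact_mod_cast this
        rcases mul_eq_zero.mp h1 with h' | h'
        · omega
        · exact hi₀ h'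
  · -- Case B: no exact solution.
    push_neg at hA
    by_contra hfin
    rw [Set.not_infinite] at hfin
    have hmem : ∀ t ∈ {t : ℕ | 0 < t ∧ ∃ v ∈ gAct n t '' Lambda n x,
        v ≠ 0 ∧ ‖v‖ ≤ Real.exp (-γ * t)}, ∃ p : ℤ, ∃ q : Fin n → ℤ,
        ((p, q) : ℤ × (Fin n → ℤ)) ∈ {pq : ℤ × (Fin n → ℤ) | pq.2 ≠ 0 ∧
          |(pq.1 : ℝ) + ∑ i, x i * (pq.2 i : ℝ)| <
            ‖(fun i => (pq.2 i : ℝ) : Fin n → ℝ)‖ ^ (-(n : ℝ) * (1 + β / (2 * n)))} ∧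
        |(p : ℝ) + ∑ i, x i * (q i : ℝ)| ≤ Real.exp (-((n : ℝ) + β) * t) := by
      rintro t ⟨ht, hv⟩
      obtain ⟨p, q, hq, ha, hr⟩ := extract_aux n x γ hγ t ht hv
      have ht0 : (0 : ℝ) ≤ t := Nat.cast_nonneg t
      have ha' : |(p : ℝ) + ∑ i, x i * (q i : ℝ)| ≤ Real.exp (-((n : ℝ) + β) * t) :=
        ha.trans (Real.exp_le_exp.mpr (by nlinarith))
      have hr' : ‖(fun i => (q i : ℝ) : Fin n → ℝ)‖ ≤ Real.exp ((1 - β) * t) :=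
        hr.trans (Real.exp_le_exp.mpr (by nlinarith))
      have hr1 : 1 ≤ ‖(fun i => (q i : ℝ) : Fin n → ℝ)‖ := by
        obtain ⟨i₀, hi₀⟩ := Function.ne_iff.mp hq
        simp only [Pi.zero_apply] at hi₀
        calc (1 : ℝ) ≤ |(q i₀ : ℝ)| := by
              rw [← Int.cast_abs]
              exact_mod_cast Int.one_le_abs hi₀
          _ ≤ ‖(fun i => (q i : ℝ) : Fin n → ℝ)‖ := by
              simpa [Real.norm_eq_abs] using
                norm_le_pi_norm (fun i => (q i : ℝ) : Fin n → ℝ) i₀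
      exact ⟨p, q, ⟨hq, keyineq_aux n hn β hβ0 hβh t ht _ _ hr1 ha' hr'⟩, ha'⟩
    -- the finite set is nonempty
    obtain ⟨t₀, ht₀⟩ := h.nonempty
    obtain ⟨p₀, q₀, hp₀, _⟩ := hmem t₀ ht₀
    have hTne : hfin.toFinset.Nonempty := by
      rw [Set.Finite.toFinset_nonempty]
      exact ⟨_, hp₀⟩
    set δ : ℝ := hfin.toFinset.inf' hTne
      (fun pq => |(pq.1 : ℝ) + ∑ i, x i * (pq.2 i : ℝ)|) with hδdef
    have hδ : 0 < δ := by
      rw [hδdef, Finset.lt_inf'_iff]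
      intro pq hpq
      have hmem2 := hfin.mem_toFinset.mp hpq
      exact abs_pos.mpr (hA _ _ hmem2.1)
    obtain ⟨k, hk⟩ := exists_nat_gt (1 / δ)
    have hk0 : (0 : ℝ) < k := lt_trans (by positivity) hk
    have hexpk : Real.exp (-((n : ℝ) + β) * k) < δ := by
      have h2 : (k : ℝ) + 1 ≤ Real.exp k := Real.add_one_le_exp k
      have h3 : Real.exp (-((n : ℝ) + β) * k) ≤ Real.exp (-(k : ℝ)) :=
        Real.exp_le_exp.mpr (by nlinarith)
      have h4 : Real.exp (-(k : ℝ)) = (Real.exp (k : ℝ))⁻¹ := Real.exp_neg k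
      have h5 : (Real.exp (k : ℝ))⁻¹ < δ := by
        have hd1 : δ * (1 / δ) = 1 := by field_simp
        nlinarith [Real.exp_pos (k : ℝ), mul_inv_cancel₀ (Real.exp_pos (k : ℝ)).ne',
          inv_nonneg.mpr (Real.exp_pos (k : ℝ)).le]
      linarith [h3, h4 ▸ h5]
    obtain ⟨t, htS, htk⟩ := h.exists_gt k
    obtain ⟨p, q, hmemS, hble⟩ := hmem t htS
    have hδle : δ ≤ |(p : ℝ) + ∑ i, x i * (q i : ℝ)| :=
      Finset.inf'_le _ (hfin.mem_toFinset.mpr hmemS)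
    have htkR : (k : ℝ) ≤ t := by exact_mod_cast htk.le
    have hmono : Real.exp (-((n : ℝ) + β) * t) ≤ Real.exp (-((n : ℝ) + β) * k) :=
      Real.exp_le_exp.mpr (by nlinarith)
    linarith
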